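/- Let I ⊂ ℝ be a closed bounded interval, let n be a positive natural number, and let V be a real normed vector space. Let (H_s)_{s ∈ I} be a family of injective linear maps from ℝⁿ to V such that for every y ∈ ℝⁿ the map s ↦ H_s y is continuous on I (i.e., for every s ∈ I and y ∈ ℝⁿ, H_t y → H_s y as t → s within I). Then there exist constants 0 < a ≤ b < ∞ such that for all s ∈ I and all y ∈ ℝⁿ, a‖y‖ ≤ ‖H_s y‖ ≤ b‖y‖. -/

import Mathlib

/-- Lemma 5.5 of the paper: a pointwise-continuous family of injective linear maps
from `ℝⁿ` into a normed space `V`, indexed by a closed bounded interval `I = [c, d]`,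
is uniformly bounded above and below: there are constants `0 < a ≤ b` with
`a‖y‖ ≤ ‖H_s y‖ ≤ b‖y‖` for all `s ∈ I` and `y ∈ ℝⁿ`. -/
theorem uniform_bounds_of_continuous_injective_family
    {n : ℕ} (hn : 0 < n) {V : Type*} [NormedAddCommGroup V] [NormedSpace ℝ V]
    (c d : ℝ) (H : ℝ → EuclideanSpace ℝ (Fin n) →ₗ[ℝ] V)
    (hinj : ∀ s ∈ Set.Icc c d, Function.Injective (H s))
    (hcont : ∀ y : EuclideanSpace ℝ (Fin n),
      ContinuousOn (fun s => H s y) (Set.Icc c d)) :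
    ∃ a b : ℝ, 0 < a ∧ a ≤ b ∧
      ∀ s ∈ Set.Icc c d, ∀ y : EuclideanSpace ℝ (Fin n),
        a * ‖y‖ ≤ ‖H s y‖ ∧ ‖H s y‖ ≤ b * ‖y‖ := by
  by_cases hcd : c ≤ d
  · -- the compact set
    set E := EuclideanSpace ℝ (Fin n)
    set K : Set (ℝ × E) := Set.Icc c d ×ˢ Metric.sphere (0 : E) 1 with hK
    have hKc : IsCompact K := isCompact_Icc.prod (isCompact_sphere 0 1)
    -- joint continuity of (s, y) ↦ H s y on K
    have hf : ContinuousOn (fun p : ℝ × E => ‖H p.1 p.2‖) K := by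
      have key : ContinuousOn (fun p : ℝ × E => H p.1 p.2) K := by
        have : ∀ p : ℝ × E, H p.1 p.2 =
            ∑ i : Fin n, p.2 i • H p.1 (EuclideanSpace.single i 1) := by
          intro p
          conv_lhs => rw [show p.2 = ∑ i : Fin n, p.2 i • EuclideanSpace.single i 1 by
            simpa [EuclideanSpace.basisFun_apply, EuclideanSpace.basisFun_repr] using
              ((EuclideanSpace.basisFun (Fin n) ℝ).sum_repr p.2).symm]
          simp [map_sum]
        simp only [this]
        apply continuousOn_finset_sum
        intro i _
        exact (((EuclideanSpace.proj i).continuous.comp continuous_snd).continuousOn).smul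
          ((hcont (EuclideanSpace.single i 1)).comp continuousOn_fst (fun p (hp : p ∈ K) => hp.1))
      exact key.norm
    -- K is nonempty
    have hKne : K.Nonempty := by
      refine ⟨(c, EuclideanSpace.single ⟨0, hn⟩ (1 : ℝ)), ⟨le_refl c, hcd⟩, ?_⟩
      rw [Metric.mem_sphere, dist_zero_right, EuclideanSpace.norm_single]
      norm_num
    obtain ⟨pmin, hpminK, hmin⟩ := hKc.exists_isMinOn hKne hf
    obtain ⟨pmax, hpmaxK, hmax⟩ := hKc.exists_isMaxOn hKne hf
    set a := ‖H pmin.1 pmin.2‖ with ha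
    set b := ‖H pmax.1 pmax.2‖ with hb
    have hapos : 0 < a := by
      rw [ha, norm_pos_iff]
      intro h0
      have : pmin.2 = 0 := hinj pmin.1 hpminK.1 (by simpa using h0)
      have : ‖pmin.2‖ = 1 := mem_sphere_zero_iff_norm.mp hpminK.2
      simp [‹pmin.2 = 0›] at this
    refine ⟨a, b, hapos, le_trans (hmin hpmaxK) (le_refl b), ?_⟩
    intro s hs y
    by_cases hy : y = 0
    · simp [hy]
    · have hny : (0 : ℝ) < ‖y‖ := norm_pos_iff.mpr hy
      set u : E := ‖y‖⁻¹ • y with hu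
      have huS : u ∈ Metric.sphere (0 : E) 1 := by
        simp [hu, norm_smul, abs_of_pos (inv_pos.mpr hny), inv_mul_cancel₀ hny.ne']
      have hmem : (s, u) ∈ K := ⟨hs, huS⟩
      have hyu : H s y = ‖y‖ • H s u := by
        rw [hu, map_smul, smul_smul, mul_inv_cancel₀ hny.ne', one_smul]
      have hnorm : ‖H s y‖ = ‖y‖ * ‖H s u‖ := by
        rw [hyu, norm_smul, Real.norm_eq_abs, abs_of_pos hny]
      constructor
      · rw [hnorm, mul_comm a]
        exact mul_le_mul_of_nonneg_left (hmin hmem) hny.le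
      · rw [hnorm, mul_comm b]
        exact mul_le_mul_of_nonneg_left (hmax hmem) hny.le
  · exact ⟨1, 1, one_pos, le_refl 1, fun s hs => absurd (hs.1.trans hs.2) hcd⟩
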